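/- arXiv:2507.05449 — 2 statements merged into one kernel-verified Lean document; each statement's English description precedes it below -/
import Mathlib

section
/- Let $A_i, B_i \subseteq [N]$ be pairs of disjoint subsets for $i$ in an index set $I$, and for disjoint $A,B \subseteq [N]$ define the partition cone $C(A,B) = \mathrm{cone}\{e_i - e_j : i \in A, j \in B\} \subseteq \mathbb{R}^N$ (with $C(A,B)=\{0\}$ if $A$ or $B$ is empty). Then $\bigcap_{i \in I} C(A_i,B_i) = C(\bigcap_i A_i, \bigcap_i B_i)$. -/
open NNReal

/-- The standard basis vector `e i` of `ℝ^N`. -/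
noncomputable def stdBasis {N : ℕ} (i : Fin N) : Fin N → ℝ := Pi.single i 1

/-- The partition cone `C(A,B) = cone {e i - e j : i ∈ A, j ∈ B}`, the set of
nonnegative linear combinations (so `C(A,B) = {0}` if `A` or `B` is empty). -/
noncomputable def partitionCone {N : ℕ} (A B : Set (Fin N)) : Set (Fin N → ℝ) :=
  (Submodule.span ℝ≥0 {x | ∃ i ∈ A, ∃ j ∈ B, x = stdBasis i - stdBasis j} : Set (Fin N → ℝ))

lemma sum_stdBasis {N : ℕ} (i : Fin N) : ∑ k, stdBasis i k = 1 := by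
  simp [stdBasis]

lemma key_aux {N : ℕ} {A B : Set (Fin N)} (hAB : Disjoint A B) :
    ∀ n (x : Fin N → ℝ), (Finset.univ.filter (fun k => x k ≠ 0)).card ≤ n →
    (∀ k, k ∉ A → x k ≤ 0) → (∀ k, k ∉ B → 0 ≤ x k) → (∑ k, x k = 0) →
    x ∈ Submodule.span ℝ≥0 {y | ∃ i ∈ A, ∃ j ∈ B, y = stdBasis i - stdBasis j} := by
  intro n
  induction n with
  | zero =>
    intro x hcard _ _ _
    have hemp := Finset.card_eq_zero.mp (Nat.le_zero.mp hcard)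
    have hx : x = 0 := by
      funext k
      by_contra hk
      have hmem : k ∈ Finset.univ.filter (fun k => x k ≠ 0) := by
        simp only [Finset.mem_filter, Finset.mem_univ, true_and]; exact hk
      rw [hemp] at hmem
      exact absurd hmem (Finset.notMem_empty k)
    simp [hx]
  | succ n IH =>
    intro x hcard hA hB hsum
    by_cases hx : x = 0
    · simp [hx]
    · have hne : ∃ k, x k ≠ 0 := by
        by_contra h; push_neg at h; exact hx (funext h)
      have ha : ∃ a, 0 < x a := by
        by_contra h; push_neg at h
        have := (Finset.sum_eq_zero_iff_of_nonpos (fun k _ => h k)).mp hsum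
        obtain ⟨k, hk⟩ := hne
        exact hk (this k (Finset.mem_univ k))
      have hb : ∃ b, x b < 0 := by
        by_contra h; push_neg at h
        have := (Finset.sum_eq_zero_iff_of_nonneg (fun k _ => h k)).mp hsum
        obtain ⟨k, hk⟩ := hne
        exact hk (this k (Finset.mem_univ k))
      obtain ⟨a, ha⟩ := ha
      obtain ⟨b, hb⟩ := hb
      have haA : a ∈ A := by
        by_contra h; exact absurd (hA a h) (not_le.mpr ha)
      have hbB : b ∈ B := by
        by_contra h; exact absurd (hB b h) (not_le.mpr hb)
      have hab : a ≠ b := by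
        rintro rfl; exact absurd ha (not_lt.mpr hb.le)
      set t : ℝ := min (x a) (-(x b)) with ht
      have ht0 : 0 < t := lt_min ha (neg_pos.mpr hb)
      set x' : Fin N → ℝ := x - t • (stdBasis a - stdBasis b) with hx'
      have hx'a : x' a = x a - t := by
        simp only [hx', Pi.sub_apply, Pi.smul_apply, stdBasis, Pi.single_eq_same,
          Pi.single_eq_of_ne hab, smul_eq_mul]
        ring
      have hx'b : x' b = x b + t := by
        simp only [hx', Pi.sub_apply, Pi.smul_apply, stdBasis, Pi.single_eq_same,
          Pi.single_eq_of_ne hab.symm, smul_eq_mul]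
        ring
      have hx'k : ∀ k, k ≠ a → k ≠ b → x' k = x k := by
        intro k hka hkb
        simp [hx', stdBasis, Pi.single_eq_of_ne hka, Pi.single_eq_of_ne hkb]
      have hA' : ∀ k, k ∉ A → x' k ≤ 0 := by
        intro k hk
        rcases eq_or_ne k a with rfl | hka
        · exact absurd haA hk
        rcases eq_or_ne k b with hkb | hkb
        · subst hkb
          rw [hx'b]
          have h2 : t ≤ -(x k) := min_le_right _ _
          linarith
        · rw [hx'k k hka hkb]; exact hA k hk
      have hB' : ∀ k, k ∉ B → 0 ≤ x' k := by
        intro k hk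
        rcases eq_or_ne k b with rfl | hkb
        · exact absurd hbB hk
        rcases eq_or_ne k a with hka | hka
        · subst hka
          rw [hx'a]
          have h2 : t ≤ x k := min_le_left _ _
          linarith
        · rw [hx'k k hka hkb]; exact hB k hk
      have hsum' : ∑ k, x' k = 0 := by
        have : ∑ k, x' k = ∑ k, x k - t * ((∑ k, stdBasis a k) - ∑ k, stdBasis b k) := by
          simp [hx', Finset.sum_sub_distrib, Finset.mul_sum, mul_sub]
        rw [this, hsum, sum_stdBasis, sum_stdBasis]; ring
      -- support shrinks
      have hsub : ∀ k, x' k ≠ 0 → x k ≠ 0 := by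
        intro k hk
        rcases eq_or_ne k a with rfl | hka
        · exact ne_of_gt ha
        rcases eq_or_ne k b with rfl | hkb
        · exact ne_of_lt hb
        · rw [hx'k k hka hkb] at hk; exact hk
      have hdrop : x' a = 0 ∨ x' b = 0 := by
        rcases min_cases (x a) (-(x b)) with ⟨h1, _⟩ | ⟨h1, _⟩
        · left; rw [hx'a, ht, h1]; ring
        · right; rw [hx'b, ht, h1]; ring
      have hcard' : (Finset.univ.filter (fun k => x' k ≠ 0)).card ≤ n := by
        have hstrict : (Finset.univ.filter (fun k => x' k ≠ 0)) ⊂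
            (Finset.univ.filter (fun k => x k ≠ 0)) := by
          constructor
          · intro k hk
            simp only [Finset.mem_filter, Finset.mem_univ, true_and] at *
            exact hsub k hk
          · intro hsup
            rcases hdrop with h | h
            · have := hsup (by simp [ne_of_gt ha] : a ∈ _)
              simp [h] at this
            · have := hsup (by simp [ne_of_lt hb] : b ∈ _)
              simp [h] at this
        have := Finset.card_lt_card hstrict
        omega
      have hmem' := IH x' hcard' hA' hB' hsum'
      have hgen : (stdBasis a - stdBasis b : Fin N → ℝ) ∈
          Submodule.span ℝ≥0 {y | ∃ i ∈ A, ∃ j ∈ B, y = stdBasis i - stdBasis j} :=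
        Submodule.subset_span ⟨a, haA, b, hbB, rfl⟩
      have : x = x' + (⟨t, ht0.le⟩ : ℝ≥0) • (stdBasis a - stdBasis b) := by
        simp [hx', NNReal.smul_def]
      rw [this]
      exact Submodule.add_mem _ hmem' (Submodule.smul_mem _ _ hgen)

lemma mem_partitionCone_iff {N : ℕ} {A B : Set (Fin N)} (hAB : Disjoint A B)
    (x : Fin N → ℝ) :
    x ∈ partitionCone A B ↔
      (∀ k, k ∉ A → x k ≤ 0) ∧ (∀ k, k ∉ B → 0 ≤ x k) ∧ (∑ k, x k = 0) := by
  constructor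
  · intro hx
    induction hx using Submodule.span_induction with
    | mem y hy =>
      obtain ⟨i, hi, j, hj, rfl⟩ := hy
      have hij : i ≠ j := fun h => hAB.ne_of_mem hi hj h
      refine ⟨?_, ?_, ?_⟩
      · intro k hk
        have hki : k ≠ i := fun h => hk (h ▸ hi)
        simp [stdBasis, Pi.single_eq_of_ne hki]
        rcases eq_or_ne k j with rfl | hkj
        · simp
        · simp [Pi.single_eq_of_ne hkj]
      · intro k hk
        have hkj : k ≠ j := fun h => hk (h ▸ hj)
        simp [stdBasis, Pi.single_eq_of_ne hkj]
        rcases eq_or_ne k i with rfl | hki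
        · simp
        · simp [Pi.single_eq_of_ne hki]
      · simp [Finset.sum_sub_distrib, sum_stdBasis]
    | zero => simp
    | add y z _ _ hy hz =>
      obtain ⟨h1, h2, h3⟩ := hy
      obtain ⟨h1', h2', h3'⟩ := hz
      refine ⟨fun k hk => by have := h1 k hk; have := h1' k hk; simp; linarith,
        fun k hk => by have := h2 k hk; have := h2' k hk; simp; positivity,
        by simp [Finset.sum_add_distrib, h3, h3']⟩
    | smul c y _ hy =>
      obtain ⟨h1, h2, h3⟩ := hy
      refine ⟨fun k hk => ?_, fun k hk => ?_, ?_⟩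
      · have := h1 k hk
        simp [NNReal.smul_def]
        exact mul_nonpos_of_nonneg_of_nonpos c.2 this
      · have := h2 k hk
        simp [NNReal.smul_def]
        positivity
      · simp [NNReal.smul_def, ← Finset.mul_sum, h3]
  · rintro ⟨h1, h2, h3⟩
    exact key_aux hAB _ x le_rfl h1 h2 h3

theorem partition_cone_intersection {N : ℕ} {I : Type*} [Nonempty I]
    (A B : I → Set (Fin N)) (hdisj : ∀ i, Disjoint (A i) (B i)) :
    ⋂ i, partitionCone (A i) (B i) = partitionCone (⋂ i, A i) (⋂ i, B i) := by
  have i₀ : I := Classical.arbitrary I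
  have hd : Disjoint (⋂ i, A i) (⋂ i, B i) :=
    ((hdisj i₀).mono (Set.iInter_subset A i₀) (Set.iInter_subset B i₀))
  ext x
  simp only [Set.mem_iInter, mem_partitionCone_iff (hdisj _), mem_partitionCone_iff hd]
  constructor
  · intro h
    refine ⟨fun k hk => ?_, fun k hk => ?_, (h i₀).2.2⟩
    · push_neg at hk
      obtain ⟨i, hi⟩ := hk
      exact (h i).1 k hi
    · push_neg at hk
      obtain ⟨i, hi⟩ := hk
      exact (h i).2.1 k hi
  · rintro ⟨h1, h2, h3⟩ i
    refine ⟨fun k hk => h1 k (fun hm => hk (hm i)),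
      fun k hk => h2 k (fun hm => hk (hm i)), h3⟩
end

section
/- Let $x_1,\dots,x_N \in \mathbb{R}^d$ and let $A,B \subseteq [N]$ be disjoint nonempty sets. Let $V = \{\alpha \in \mathbb{R}^N : \sum_i \alpha_i x_i = 0 \text{ and } \sum_i \alpha_i = 0\}$. Then $\mathrm{conv}\{x_i : i \in A\} \cap \mathrm{conv}\{x_j : j \in B\} \neq \emptyset$ if and only if $F(A,B) \cap V \neq \emptyset$, where $F(A,B) = \mathrm{conv}\{e_i - e_j : i \in A, j \in B\} \subseteq \mathbb{R}^N$. -/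
open NNReal

lemma mem_convexHull_finset_image {ι : Type*} [DecidableEq ι] {E : Type*} [AddCommGroup E]
    [Module ℝ E] (A : Finset ι) (x : ι → E) (p : E) :
    p ∈ convexHull ℝ (x '' A) ↔
      ∃ w : ι → ℝ, (∀ i, 0 ≤ w i) ∧ (∀ i ∉ A, w i = 0) ∧ ∑ i ∈ A, w i = 1 ∧
        ∑ i ∈ A, w i • x i = p := by
  constructor
  · intro hp
    have hsub : convexHull ℝ (x '' A) ⊆
        {p | ∃ w : ι → ℝ, (∀ i, 0 ≤ w i) ∧ (∀ i ∉ A, w i = 0) ∧ ∑ i ∈ A, w i = 1 ∧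
          ∑ i ∈ A, w i • x i = p} := by
      apply convexHull_min
      · rintro _ ⟨i, hi', rfl⟩
        have hi : i ∈ A := Finset.mem_coe.mp hi'
        refine ⟨fun k => if k = i then 1 else 0, by intro k; positivity, ?_, ?_, ?_⟩
        · intro k hk
          simp only [ite_eq_right_iff, one_ne_zero]
          rintro rfl; exact hk hi
        · simp [Finset.sum_ite_eq' A i (fun _ => (1:ℝ)), hi]
        · rw [Finset.sum_congr rfl (g := fun k => if k = i then x k else 0)
            (fun k _ => by by_cases h : k = i <;> simp [h])]
          simp [Finset.sum_ite_eq' A i x, hi]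
      · rintro u ⟨wu, hwu0, hwuA, hwu1, hwux⟩ v ⟨wv, hwv0, hwvA, hwv1, hwvx⟩ a b ha hb hab
        refine ⟨fun i => a * wu i + b * wv i, ?_, ?_, ?_, ?_⟩
        · intro i; have := hwu0 i; have := hwv0 i; positivity
        · intro i hi; simp only [hwuA i hi, hwvA i hi]; ring
        · rw [Finset.sum_add_distrib, ← Finset.mul_sum, ← Finset.mul_sum,
            hwu1, hwv1, mul_one, mul_one, hab]
        · simp only [add_smul, mul_smul, Finset.sum_add_distrib, ← Finset.smul_sum,
            hwux, hwvx]
    exact hsub hp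
  · rintro ⟨w, hw0, hwA, hw1, rfl⟩
    rw [← Finset.centerMass_eq_of_sum_1 A x hw1]
    exact Finset.centerMass_mem_convexHull A (fun i _ => hw0 i) (by rw [hw1]; norm_num)
      (fun i hi => Set.mem_image_of_mem x hi)

/-- The partition face `F(A,B) = conv {e i - e j : i ∈ A, j ∈ B}`. -/
noncomputable def partitionFace {N : ℕ} (A B : Finset (Fin N)) : Set (Fin N → ℝ) :=
  convexHull ℝ {x | ∃ i ∈ A, ∃ j ∈ B, x = stdBasis i - stdBasis j}

lemma partitionFace_eq {N : ℕ} (A B : Finset (Fin N)) :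
    partitionFace A B = convexHull ℝ
      ((fun q : Fin N × Fin N => stdBasis q.1 - stdBasis q.2) '' ↑(A ×ˢ B)) := by
  unfold partitionFace
  congr 1
  ext y
  constructor
  · rintro ⟨i, hi, j, hj, rfl⟩
    exact ⟨(i, j), Finset.mem_coe.mpr (Finset.mk_mem_product hi hj), rfl⟩
  · rintro ⟨⟨i, j⟩, hq, rfl⟩
    have := Finset.mem_product.mp (Finset.mem_coe.mp hq)
    exact ⟨i, this.1, j, this.2, rfl⟩

lemma sum_smul_stdBasis {N : ℕ} (S : Finset (Fin N)) (w : Fin N → ℝ)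
    (hw : ∀ i ∉ S, w i = 0) : ∑ i ∈ S, w i • stdBasis i = w := by
  funext k
  rw [Finset.sum_apply]
  simp only [Pi.smul_apply, stdBasis, Pi.single_apply, smul_eq_mul, mul_ite, mul_one, mul_zero]
  rw [Finset.sum_congr rfl (g := fun i => if k = i then w i else 0)
    (fun i _ => by by_cases h : (k : Fin N) = i <;> simp [h])]
  rw [Finset.sum_ite_eq S k w]
  by_cases h : k ∈ S <;> simp [h, hw]

theorem radon_partition_iff_face_meets_V {N d : ℕ} (x : Fin N → (Fin d → ℝ))
    (A B : Finset (Fin N)) (hAB : Disjoint A B) (hA : A.Nonempty) (hB : B.Nonempty) :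
    (convexHull ℝ (x '' A) ∩ convexHull ℝ (x '' B)).Nonempty ↔
      (partitionFace A B ∩
        {α : Fin N → ℝ | ∑ i, α i • x i = 0 ∧ ∑ i, α i = 0}).Nonempty := by
  constructor
  · rintro ⟨p, hpA, hpB⟩
    rw [mem_convexHull_finset_image] at hpA hpB
    obtain ⟨a, ha0, haA, ha1, hax⟩ := hpA
    obtain ⟨b, hb0, hbB, hb1, hbx⟩ := hpB
    refine ⟨a - b, ?_, ?_, ?_⟩
    · rw [partitionFace_eq, mem_convexHull_finset_image]
      refine ⟨fun q => a q.1 * b q.2, fun q => mul_nonneg (ha0 q.1) (hb0 q.2), ?_, ?_, ?_⟩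
      · intro q hq
        rw [Finset.mem_product, not_and_or] at hq
        rcases hq with h | h
        · simp only []; rw [haA q.1 h, zero_mul]
        · simp only []; rw [hbB q.2 h, mul_zero]
      · rw [Finset.sum_product]
        simp_rw [← Finset.mul_sum, hb1, mul_one, ha1]
      · have key : ∑ q ∈ A ×ˢ B, (a q.1 * b q.2) • (stdBasis q.1 - stdBasis q.2)
            = ∑ i ∈ A, a i • stdBasis i - ∑ j ∈ B, b j • stdBasis j := by
          rw [Finset.sum_product]
          have step : ∀ i ∈ A, ∑ j ∈ B, (a i * b j) • (stdBasis i - stdBasis j)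
              = a i • stdBasis i - a i • ∑ j ∈ B, b j • stdBasis j := by
            intro i _
            simp_rw [smul_sub, Finset.sum_sub_distrib, ← Finset.sum_smul, ← Finset.mul_sum,
              hb1, mul_one, mul_smul, ← Finset.smul_sum]
          rw [Finset.sum_congr rfl step, Finset.sum_sub_distrib, ← Finset.sum_smul, ha1,
            one_smul]
        rw [key, sum_smul_stdBasis A a haA, sum_smul_stdBasis B b hbB]
    · have hA' : ∑ i, a i • x i = p := by
        rw [← hax]
        exact (Finset.sum_subset (Finset.subset_univ A)
          (fun i _ hi => by rw [haA i hi, zero_smul])).symm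
      have hB' : ∑ i, b i • x i = p := by
        rw [← hbx]
        exact (Finset.sum_subset (Finset.subset_univ B)
          (fun i _ hi => by rw [hbB i hi, zero_smul])).symm
      simp only [Pi.sub_apply, sub_smul, Finset.sum_sub_distrib, hA', hB', sub_self]
    · have hA' : ∑ i, a i = 1 := by
        rw [← ha1]
        exact (Finset.sum_subset (Finset.subset_univ A) (fun i _ hi => haA i hi)).symm
      have hB' : ∑ i, b i = 1 := by
        rw [← hb1]
        exact (Finset.sum_subset (Finset.subset_univ B) (fun i _ hi => hbB i hi)).symm
      simp only [Pi.sub_apply, Finset.sum_sub_distrib, hA', hB', sub_self]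
  · rintro ⟨α, hface, hV1, hV2⟩
    rw [partitionFace_eq, mem_convexHull_finset_image] at hface
    obtain ⟨w, hw0, hwsupp, hw1, hwsum⟩ := hface
    set a : Fin N → ℝ := fun i => ∑ j ∈ B, w (i, j) with ha_def
    set b : Fin N → ℝ := fun j => ∑ i ∈ A, w (i, j) with hb_def
    have haA : ∀ i ∉ A, a i = 0 := by
      intro i hi
      exact Finset.sum_eq_zero fun j _ => hwsupp (i, j)
        (fun h => hi (Finset.mem_product.mp h).1)
    have hbB : ∀ j ∉ B, b j = 0 := by
      intro j hj
      exact Finset.sum_eq_zero fun i _ => hwsupp (i, j)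
        (fun h => hj (Finset.mem_product.mp h).2)
    have ha1 : ∑ i ∈ A, a i = 1 := by rw [← hw1, Finset.sum_product]
    have hb1 : ∑ j ∈ B, b j = 1 := by rw [← hw1, Finset.sum_product_right]
    have hαab : α = a - b := by
      rw [← hwsum]
      have key : ∑ q ∈ A ×ˢ B, w q • (stdBasis q.1 - stdBasis q.2)
          = ∑ i ∈ A, a i • stdBasis i - ∑ j ∈ B, b j • stdBasis j := by
        simp_rw [smul_sub, Finset.sum_sub_distrib]
        congr 1
        · rw [Finset.sum_product]
          exact Finset.sum_congr rfl fun i _ => by rw [ha_def, Finset.sum_smul]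
        · rw [Finset.sum_product_right]
          exact Finset.sum_congr rfl fun j _ => by rw [hb_def, Finset.sum_smul]
      rw [key, sum_smul_stdBasis A a haA, sum_smul_stdBasis B b hbB]
    have ha0 : ∀ i, 0 ≤ a i := fun i => Finset.sum_nonneg fun j _ => hw0 (i, j)
    have hb0 : ∀ j, 0 ≤ b j := fun j => Finset.sum_nonneg fun i _ => hw0 (i, j)
    refine ⟨∑ i ∈ A, a i • x i, ?_, ?_⟩
    · rw [mem_convexHull_finset_image]
      exact ⟨a, ha0, haA, ha1, rfl⟩
    · rw [mem_convexHull_finset_image]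
      refine ⟨b, hb0, hbB, hb1, ?_⟩
      have h0 : (0 : Fin d → ℝ) = ∑ i ∈ A, a i • x i - ∑ j ∈ B, b j • x j := by
        rw [← hV1, hαab]
        simp only [Pi.sub_apply, sub_smul, Finset.sum_sub_distrib]
        congr 1
        · exact Finset.sum_subset (Finset.subset_univ A)
            (fun i _ hi => by rw [haA i hi, zero_smul]) |>.symm
        · exact Finset.sum_subset (Finset.subset_univ B)
            (fun i _ hi => by rw [hbB i hi, zero_smul]) |>.symm
      exact (sub_eq_zero.mp h0.symm).symm
end
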